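/- Let (B, K) be a formal basket datum with χ = 1 whose formal plurigenera P(m) are non-negative integers for every integer m ≥ 2. If P(2) = 0 and B contains a basket of index r ≥ 28, then P(18) ≥ 3. -/
import Mathlib

open Finset

/-- If `c + d ≡ 0 (mod r)` and `c, d < r` then `c(r-c) = d(r-d)`. -/
private lemma prod_eq_of_add_mod (r c d : ℕ) (hc : c < r) (hd : d < r)
    (h : (c + d) % r = 0) : c * (r - c) = d * (r - d) := by
  obtain ⟨t, ht⟩ := Nat.dvd_of_mod_eq_zero h
  have ht2 : t ≤ 1 := by
    by_contra hgt
    push_neg at hgt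
    have h1 : r * 2 ≤ r * t := Nat.mul_le_mul_left r hgt
    have h2 : c + d < r * 2 := by omega
    rw [ht] at h2
    exact absurd h2 (not_lt.2 h1)
  interval_cases t
  · have hc0 : c = 0 := by omega
    have hd0 : d = 0 := by omega
    rw [hc0, hd0]
  · have h1 : r - c = d := by omega
    have h2 : r - d = c := by omega
    rw [h1, h2, Nat.mul_comm]

/-- Subadditivity-type key inequality in ℕ. -/
private lemma subkey (r c e : ℕ) (hc : c < r) (he : e < r) :
    e * (r - e) ≤ c * (r - c) + ((c + e) % r) * (r - (c + e) % r) := by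
  rcases Nat.lt_or_ge (c + e) r with h | h
  · rw [Nat.mod_eq_of_lt h]
    have h1 : (0:ℤ) ≤ (c:ℤ) * ((r:ℤ) - c - e) := mul_nonneg (by omega) (by omega)
    zify [hc.le, he.le, h.le]
    nlinarith [h1]
  · have hm : (c + e) % r = c + e - r := by
      rw [Nat.mod_eq_sub_mod h, Nat.mod_eq_of_lt (by omega)]
    rw [hm]
    have h1 : (0:ℤ) ≤ ((c:ℤ) + e - r) * ((r:ℤ) - c) := mul_nonneg (by omega) (by omega)
    zify [hc.le, he.le, h, (show c + e - r ≤ r by omega)]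
    nlinarith [h1]

/-- Claim (A) in ℕ: `∑_{j<18} f(j) ≥ 9 f(1)`. -/
private lemma natA (r b : ℕ) (hr : 0 < r) :
    9 * ((b % r) * (r - b % r)) ≤
      ∑ j ∈ range 18, ((b * j) % r) * (r - (b * j) % r) := by
  have pair : ∀ n : ℕ, (b % r) * (r - b % r) ≤
      ((b * n) % r) * (r - (b * n) % r) + ((b * (n+1)) % r) * (r - (b * (n+1)) % r) := by
    intro n
    have h1 : b * (n+1) = b * n + b := by ring
    have h2 : (b * (n+1)) % r = ((b * n) % r + b % r) % r := by
      rw [h1, Nat.add_mod]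
    rw [h2]
    exact subkey r ((b * n) % r) (b % r) (Nat.mod_lt _ hr) (Nat.mod_lt _ hr)
  have p2 := pair 2; have p4 := pair 4; have p6 := pair 6; have p8 := pair 8
  have p10 := pair 10; have p12 := pair 12; have p14 := pair 14; have p16 := pair 16
  norm_num at p2 p4 p6 p8 p10 p12 p14 p16
  simp only [Finset.sum_range_succ, Finset.sum_range_zero]
  norm_num
  linarith [p2, p4, p6, p8, p10, p12, p14, p16]

set_option maxRecDepth 100000 in
private lemma finiteCheck : ∀ r < 137, ∀ b < 9,
    (28 ≤ r ∧ 0 < b ∧ b < r ∧ b * (r - b) < 6 * r) →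
    9 * (b * (r - b)) + 20 * r ≤ ∑ j ∈ range 18, ((b * j) % r) * (r - (b * j) % r) := by
  decide

/-- Core claim (B) in ℕ, case `2b ≤ r`. -/
private lemma core_aux (r b : ℕ) (hr : 28 ≤ r) (hb0 : 0 < b) (hw : 2 * b ≤ r)
    (hsmall : b * (r - b) < 6 * r) :
    9 * (b * (r - b)) + 20 * r ≤ ∑ j ∈ range 18, ((b * j) % r) * (r - (b * j) % r) := by
  have hb8 : b ≤ 8 := by
    by_contra hgt
    push_neg at hgt
    have hb12 : b < 12 := by
      by_contra h12
      push_neg at h12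
      have hm : 12 * (r - b) ≤ b * (r - b) := Nat.mul_le_mul_right _ h12
      have h6 : 6 * r ≤ 12 * (r - b) := by omega
      exact absurd (lt_of_le_of_lt (h6.trans hm) hsmall) (lt_irrefl _)
    interval_cases b <;> omega
  rcases Nat.lt_or_ge r 137 with hlt | hge
  · exact finiteCheck r hlt b (by omega) ⟨hr, hb0, by omega, hsmall⟩
  · have hmod : ∀ j ∈ range 18, ((b * j) % r) * (r - (b * j) % r) = (b * j) * (r - b * j) := by
      intro j hj
      have hj18 : j < 18 := Finset.mem_range.mp hj
      have hlt' : b * j < r := by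
        have h1 : b * j ≤ 8 * 17 := Nat.mul_le_mul hb8 (by omega)
        omega
      rw [Nat.mod_eq_of_lt hlt']
    rw [Finset.sum_congr rfl hmod]
    simp only [Finset.sum_range_succ, Finset.sum_range_zero]
    have hb' : (1:ℤ) ≤ (b:ℤ) := by exact_mod_cast hb0
    have hb8' : (b:ℤ) ≤ 8 := by exact_mod_cast hb8
    have hr' : (137:ℤ) ≤ (r:ℤ) := by exact_mod_cast hge
    have hint1 : (0:ℤ) ≤ ((b:ℤ) - 1) * (144 * (r:ℤ) - 1776 * b) := by
      apply mul_nonneg (by linarith) (by linarith)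
    zify [(show b * 0 ≤ r by omega), (show b * 1 ≤ r by omega), (show b * 2 ≤ r by omega),
      (show b * 3 ≤ r by omega), (show b * 4 ≤ r by omega), (show b * 5 ≤ r by omega),
      (show b * 6 ≤ r by omega), (show b * 7 ≤ r by omega), (show b * 8 ≤ r by omega),
      (show b * 9 ≤ r by omega), (show b * 10 ≤ r by omega), (show b * 11 ≤ r by omega),
      (show b * 12 ≤ r by omega), (show b * 13 ≤ r by omega), (show b * 14 ≤ r by omega),
      (show b * 15 ≤ r by omega), (show b * 16 ≤ r by omega), (show b * 17 ≤ r by omega),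
      (show b ≤ r by omega)]
    nlinarith [hint1]

/-- Core claim (B) in ℕ. -/
private lemma coreB (r b : ℕ) (hr : 28 ≤ r) (hb0 : 0 < b) (hbr : b < r)
    (hsmall : b * (r - b) < 6 * r) :
    9 * (b * (r - b)) + 20 * r ≤ ∑ j ∈ range 18, ((b * j) % r) * (r - (b * j) % r) := by
  rcases le_or_gt (2 * b) r with hw | hw
  · exact core_aux r b hr hb0 hw hsmall
  · have hb' : 0 < r - b := by omega
    have hw' : 2 * (r - b) ≤ r := by omega
    have hprod : (r - b) * (r - (r - b)) = b * (r - b) := by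
      rw [Nat.sub_sub_self hbr.le, Nat.mul_comm]
    have hterm : ∀ j ∈ range 18,
        ((b * j) % r) * (r - (b * j) % r) = (((r - b) * j) % r) * (r - ((r - b) * j) % r) := by
      intro j _
      have hc : (b * j) % r < r := Nat.mod_lt _ (by omega)
      have hd : ((r - b) * j) % r < r := Nat.mod_lt _ (by omega)
      apply prod_eq_of_add_mod r _ _ hc hd
      rw [← Nat.add_mod]
      have he : b * j + (r - b) * j = r * j := by
        have h : b + (r - b) = r := by omega
        calc b * j + (r - b) * j = (b + (r - b)) * j := by ring
          _ = r * j := by rw [h]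
      rw [he, Nat.mul_mod_right]
    rw [Finset.sum_congr rfl hterm]
    have := core_aux r (r - b) hr hb' hw' (by rw [hprod]; exact hsmall)
    rw [hprod] at this
    exact this


/-- The Reid correction term `l(r, b, m) = ∑_{j=1}^{m-1} \overline{bj}(r-\overline{bj})/(2r)`,
where `\overline{bj}` is the smallest non-negative residue of `b*j` mod `r`.
(The `j = 0` term vanishes, so we may sum over `j ∈ range m`.) -/
def reidL (r b m : ℕ) : ℚ :=
  ∑ j ∈ Finset.range m,
    (((b * j) % r : ℕ) : ℚ) * ((r : ℚ) - (((b * j) % r : ℕ) : ℚ)) / (2 * r)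

private lemma reidL_eq (r b m : ℕ) (hr : 0 < r) :
    reidL r b m = ((∑ j ∈ Finset.range m, ((b * j) % r) * (r - (b * j) % r) : ℕ) : ℚ) / (2 * r) := by
  rw [reidL, Nat.cast_sum, Finset.sum_div]
  refine Finset.sum_congr rfl fun j _ => ?_
  have h : (b * j) % r < r := Nat.mod_lt _ hr
  rw [Nat.cast_mul, Nat.cast_sub h.le]

private lemma reidL_nonneg (r b m : ℕ) (hr : 0 < r) : 0 ≤ reidL r b m := by
  rw [reidL_eq r b m hr]
  positivity

private lemma reidL_two (r b : ℕ) (hb : b < r) :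
    reidL r b 2 = ((b * (r - b) : ℕ) : ℚ) / (2 * r) := by
  rw [reidL_eq r b 2 (by omega)]
  congr 2
  rw [Finset.sum_range_succ, Finset.sum_range_succ, Finset.sum_range_zero]
  simp [Nat.mod_eq_of_lt hb]

/-- Claim (A) in ℚ. -/
private lemma qA (r b : ℕ) (hr : 0 < r) : 9 * reidL r b 2 ≤ reidL r b 18 := by
  have hb : b % r < r := Nat.mod_lt _ hr
  have h2 : reidL r b 2 = (((b % r) * (r - b % r) : ℕ) : ℚ) / (2 * r) := by
    rw [reidL_eq r b 2 hr]
    congr 2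
    rw [Finset.sum_range_succ, Finset.sum_range_succ, Finset.sum_range_zero]
    simp
  rw [h2, reidL_eq r b 18 hr, ← mul_div_assoc]
  apply div_le_div_of_nonneg_right ?_ (by positivity)
  exact_mod_cast natA r b hr

/-- Claim (B) in ℚ. -/
private lemma qB (r b : ℕ) (hr : 28 ≤ r) (hb0 : 0 < b) (hbr : b < r)
    (hl2 : reidL r b 2 < 3) : 9 * reidL r b 2 + 10 ≤ reidL r b 18 := by
  have hrpos : 0 < r := by omega
  have hsmall : b * (r - b) < 6 * r := by
    rw [reidL_two r b hbr, div_lt_iff₀ (by positivity)] at hl2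
    have h6 : ((6 * r : ℕ) : ℚ) = 3 * (2 * (r:ℚ)) := by push_cast; ring
    rw [← h6] at hl2
    exact_mod_cast hl2
  have hcore := coreB r b hr hb0 hbr hsmall
  have hcast : ((9 * (b * (r - b)) + 20 * r : ℕ) : ℚ) ≤
      ((∑ j ∈ Finset.range 18, ((b * j) % r) * (r - (b * j) % r) : ℕ) : ℚ) := by
    exact_mod_cast hcore
  rw [reidL_two r b hbr, reidL_eq r b 18 hrpos]
  have hrq : (0:ℚ) < 2 * (r:ℚ) := by positivity
  have h1 : (9 * ((b * (r - b) : ℕ) : ℚ) + 20 * r) / (2 * r)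
      ≤ ((∑ j ∈ Finset.range 18, ((b * j) % r) * (r - (b * j) % r) : ℕ) : ℚ) / (2 * r) := by
    apply div_le_div_of_nonneg_right ?_ hrq.le
    push_cast at hcast ⊢
    linarith
  have h2 : 9 * (((b * (r - b) : ℕ) : ℚ) / (2 * r)) + 10
      = (9 * ((b * (r - b) : ℕ) : ℚ) + 20 * r) / (2 * r) := by
    field_simp
    ring
  rw [h2]
  exact h1

/-- A basket of type `1/r(a, -a, 1)`: a pair of integers `(r, a)` with `r ≥ 2`,
`0 < a < r` and `gcd(a, r) = 1`. -/
structure Basket where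
  r : ℕ
  a : ℕ
  two_le_r : 2 ≤ r
  a_pos : 0 < a
  a_lt_r : a < r
  coprime : Nat.Coprime a r

/-- The unique `b` with `0 < b < r` and `a * b ≡ 1 (mod r)`. -/
def Basket.binv (Q : Basket) : ℕ := ((Q.a : ZMod Q.r)⁻¹).val

/-- The correction term `l(Q, m)` of a basket. -/
def Basket.l (Q : Basket) (m : ℕ) : ℚ := reidL Q.r Q.binv m

private lemma Basket.r_pos (Q : Basket) : 0 < Q.r := by have := Q.two_le_r; omega

private lemma Basket.binv_lt (Q : Basket) : Q.binv < Q.r := by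
  haveI : NeZero Q.r := ⟨by have := Q.two_le_r; omega⟩
  exact ZMod.val_lt _

private lemma Basket.binv_pos (Q : Basket) : 0 < Q.binv := by
  haveI : NeZero Q.r := ⟨by have := Q.two_le_r; omega⟩
  rcases Nat.eq_zero_or_pos Q.binv with h | h
  · exfalso
    have h0 : ((Q.a : ZMod Q.r))⁻¹ = 0 := by
      have := (ZMod.val_eq_zero _).mp h
      exact this
    have h1 : ((Q.a : ZMod Q.r)) * (Q.a : ZMod Q.r)⁻¹ = 1 :=
      ZMod.coe_mul_inv_eq_one _ Q.coprime
    rw [h0, mul_zero] at h1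
    haveI : Fact (1 < Q.r) := ⟨Q.two_le_r⟩
    exact zero_ne_one h1
  · exact h

private lemma Basket.l_nonneg (Q : Basket) (m : ℕ) : 0 ≤ Q.l m :=
  reidL_nonneg _ _ _ Q.r_pos

private lemma Basket.qA (Q : Basket) : 9 * Q.l 2 ≤ Q.l 18 := _root_.qA _ _ Q.r_pos

private lemma Basket.qB (Q : Basket) (hr : 28 ≤ Q.r) (h2 : Q.l 2 < 3) :
    9 * Q.l 2 + 10 ≤ Q.l 18 :=
  _root_.qB _ _ hr Q.binv_pos Q.binv_lt h2

/-- `Δ_n(Q) := n² l(Q,2) + l(Q,n) - l(Q,n+1)`. -/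
def Basket.delta (Q : Basket) (n : ℕ) : ℚ :=
  (n : ℚ) ^ 2 * Q.l 2 + Q.l n - Q.l (n + 1)

/-- A formal basket datum with `χ = 1`: a finite multiset of baskets together
with a positive rational number `K`. -/
structure FormalDatum where
  B : Multiset Basket
  K : ℚ
  K_pos : 0 < K

/-- The formal plurigenus `P(m) = (1/12)m(m-1)(2m-1)K - (2m-1) + ∑_{Q ∈ B} l(Q, m)`. -/
def FormalDatum.P (D : FormalDatum) (m : ℕ) : ℚ :=
  (1 / 12 : ℚ) * m * (m - 1) * (2 * m - 1) * D.K - (2 * m - 1)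
    + (D.B.map (fun Q => Q.l m)).sum

/-- If the formal plurigenera of a formal basket datum with `χ = 1` are
non-negative integers, `P(2) = 0`, and the multiset contains a basket of index
`r ≥ 28`, then `P(18) ≥ 3`. -/
theorem formal_P_eighteen_ge_three (D : FormalDatum)
    (hint : ∀ m : ℕ, 2 ≤ m → ∃ k : ℕ, D.P m = (k : ℚ))
    (h2 : D.P 2 = 0) (hQ : ∃ Q ∈ D.B, 28 ≤ Q.r) :
    3 ≤ D.P 18 := by
  obtain ⟨Q₀, hQ0, hr28⟩ := hQ
  obtain ⟨t, hcons⟩ : ∃ t, D.B = Q₀ ::ₘ t := Multiset.exists_cons_of_mem hQ0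
  have hmap2 : (D.B.map fun Q => Q.l 2).sum = Q₀.l 2 + (t.map fun Q => Q.l 2).sum := by
    rw [hcons, Multiset.map_cons, Multiset.sum_cons]
  have hmap18 : (D.B.map fun Q => Q.l 18).sum = Q₀.l 18 + (t.map fun Q => Q.l 18).sum := by
    rw [hcons, Multiset.map_cons, Multiset.sum_cons]
  have hσt0 : 0 ≤ (t.map fun Q => Q.l 2).sum := by
    apply Multiset.sum_nonneg
    intro x hx
    obtain ⟨Q, _, rfl⟩ := Multiset.mem_map.1 hx
    exact Q.l_nonneg 2
  have h18t : 9 * (t.map fun Q => Q.l 2).sum ≤ (t.map fun Q => Q.l 18).sum := by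
    calc 9 * (t.map fun Q => Q.l 2).sum = (t.map fun Q => 9 * Q.l 2).sum := by
          rw [← Multiset.sum_map_mul_left]
      _ ≤ (t.map fun Q => Q.l 18).sum := by
          apply Multiset.sum_map_le_sum_map
          intro Q _
          exact Q.qA
  -- unfold P 2 relation
  simp only [FormalDatum.P] at h2
  push_cast at h2
  rw [hmap2] at h2
  -- l(Q₀,2) < 3
  have hl2lt : Q₀.l 2 < 3 := by nlinarith [D.K_pos]
  have hB := Q₀.qB hr28 hl2lt
  -- conclude P 18 > 2
  have hgt : (2 : ℚ) < D.P 18 := by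
    simp only [FormalDatum.P]
    push_cast
    rw [hmap18]
    nlinarith [D.K_pos]
  obtain ⟨k, hk⟩ := hint 18 (by norm_num)
  rw [hk] at hgt ⊢
  have h2k : (2 : ℕ) < k := by exact_mod_cast hgt
  exact_mod_cast (show (3:ℕ) ≤ k by omega)
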